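/- (Bellman error decomposition.) Suppose V : ℝ^{2n} → ℝ is C¹ and satisfies the HJB equation, and let σ : ℝ^{2n} → ℝ^L be C¹, W ∈ ℝ^L, and ε(x) := V(x) - Wᵀσ(x). For W_c, W_a ∈ ℝ^L define the approximate policy û(x,W_a) := -(1/2)R⁻¹G(x)ᵀ∇σ(x)ᵀW_a and the Bellman error δ(x,W_c,W_a) := W_cᵀ∇σ(x)(F(x) + G(x)û(x,W_a)) + Q(x) + û(x,W_a)ᵀR û(x,W_a). Then for every x, δ(x,W_c,W_a) = -ω(x,W_a)ᵀW̃_c + (1/4)W̃_aᵀ G_σ(x) W̃_a + Δ(x), where W̃_c := W - W_c, W̃_a := W - W_a, ω(x,W_a) := ∇σ(x)(F(x) + G(x)û(x,W_a)), Ḡ(x) := G(x)R⁻¹G(x)ᵀ, G_σ(x) := ∇σ(x)Ḡ(x)∇σ(x)ᵀ, and Δ(x) := (1/2)Wᵀ∇σ(x)Ḡ(x)∇ε(x)ᵀ + (1/4)∇ε(x)Ḡ(x)∇ε(x)ᵀ - ∇ε(x)F(x). -/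

import Mathlib

open Matrix MeasureTheory

noncomputable section

/-- State space of the second-order plant: `x = (p, q)` with `p, q ∈ ℝⁿ`. -/
abbrev XSp (n : ℕ) := (Fin n → ℝ) × (Fin n → ℝ)

/-- Drift vector field `F(x) = (q, f(x))`. -/
def Fvec {n : ℕ} (f : XSp n → Fin n → ℝ) (x : XSp n) : XSp n := (x.2, f x)

/-- Action of the control effectiveness matrix `G(x) = (0, g(x))` on `u`. -/
def Gapp {n m : ℕ} (g : XSp n → Matrix (Fin n) (Fin m) ℝ) (x : XSp n)
    (u : Fin m → ℝ) : XSp n := (0, (g x).mulVec u)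

/-- The `j`-th column of `G(x) = (0, g(x))`. -/
def Gcol {n m : ℕ} (g : XSp n → Matrix (Fin n) (Fin m) ℝ) (x : XSp n)
    (j : Fin m) : XSp n := (0, fun i => g x i j)

/-- The optimal feedback `u*(x) = -(1/2) R⁻¹ G(x)ᵀ ∇V(x)ᵀ`. -/
def uStar {n m : ℕ} (g : XSp n → Matrix (Fin n) (Fin m) ℝ)
    (R : Matrix (Fin m) (Fin m) ℝ) (V : XSp n → ℝ) (x : XSp n) : Fin m → ℝ :=
  (-(1 / 2 : ℝ)) • R⁻¹.mulVec (fun j => fderiv ℝ V x (Gcol g x j))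

/-- `V` satisfies the Hamilton–Jacobi–Bellman equation:
`∇V(x)·(F(x) + G(x)u*(x)) + Q(x) + u*(x)ᵀ R u*(x) = 0` for all `x`. -/
def SatisfiesHJB {n m : ℕ} (f : XSp n → Fin n → ℝ)
    (g : XSp n → Matrix (Fin n) (Fin m) ℝ) (Q : XSp n → ℝ)
    (R : Matrix (Fin m) (Fin m) ℝ) (V : XSp n → ℝ) : Prop :=
  ∀ x : XSp n,
    fderiv ℝ V x (Fvec f x + Gapp g x (uStar g R V x)) + Q x
      + uStar g R V x ⬝ᵥ R.mulVec (uStar g R V x) = 0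

/-- `φ` is a closed-loop solution on `[0,∞)` under the feedback `u`. -/
def IsClosedLoopSol {n m : ℕ} (f : XSp n → Fin n → ℝ)
    (g : XSp n → Matrix (Fin n) (Fin m) ℝ) (u : XSp n → Fin m → ℝ)
    (φ : ℝ → XSp n) : Prop :=
  ∀ t ∈ Set.Ici (0 : ℝ),
    HasDerivWithinAt φ (Fvec f (φ t) + Gapp g (φ t) (u (φ t))) (Set.Ici 0) t


/-- Approximate policy `û(x, Wₐ) = -(1/2) R⁻¹ G(x)ᵀ ∇σ(x)ᵀ Wₐ`. -/
def uHat {n m L : ℕ} (g : XSp n → Matrix (Fin n) (Fin m) ℝ)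
    (R : Matrix (Fin m) (Fin m) ℝ) (σ : XSp n → Fin L → ℝ)
    (x : XSp n) (Wa : Fin L → ℝ) : Fin m → ℝ :=
  (-(1 / 2 : ℝ)) • R⁻¹.mulVec (fun j => Wa ⬝ᵥ fderiv ℝ σ x (Gcol g x j))

/-- The vector `G(x)ᵀ ∇σ(x)ᵀ W ∈ ℝᵐ`. -/
def gradSigmaG {n m L : ℕ} (g : XSp n → Matrix (Fin n) (Fin m) ℝ)
    (σ : XSp n → Fin L → ℝ) (x : XSp n) (W : Fin L → ℝ) : Fin m → ℝ :=
  fun j => W ⬝ᵥ fderiv ℝ σ x (Gcol g x j)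

/-- Bellman error decomposition: for `V` a C¹ solution of the
HJB equation, `ε := V - Wᵀσ`, the Bellman error
`δ(x, W_c, W_a) = W_cᵀ∇σ(x)(F(x)+G(x)û) + Q(x) + ûᵀRû` decomposes as
`δ = -ωᵀW̃_c + (1/4)W̃_aᵀG_σW̃_a + Δ`. -/
theorem bellman_error_decomposition
    {n m L : ℕ} (f : XSp n → Fin n → ℝ)
    (g : XSp n → Matrix (Fin n) (Fin m) ℝ)
    (Q : XSp n → ℝ) (hQcont : Continuous Q)
    (R : Matrix (Fin m) (Fin m) ℝ) (hR : R.PosDef)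
    (V : XSp n → ℝ) (hV : ContDiff ℝ 1 V)
    (hHJB : SatisfiesHJB f g Q R V)
    (σ : XSp n → Fin L → ℝ) (hσ : ContDiff ℝ 1 σ)
    (W Wc Wa : Fin L → ℝ)
    (ε : XSp n → ℝ) (hε : ∀ x, ε x = V x - W ⬝ᵥ σ x)
    (δ : XSp n → (Fin L → ℝ) → (Fin L → ℝ) → ℝ)
    (hδ : ∀ x Wc' Wa', δ x Wc' Wa' =
      Wc' ⬝ᵥ fderiv ℝ σ x (Fvec f x + Gapp g x (uHat g R σ x Wa'))
        + Q x + uHat g R σ x Wa' ⬝ᵥ R.mulVec (uHat g R σ x Wa'))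
    (ω : XSp n → (Fin L → ℝ) → Fin L → ℝ)
    (hω : ∀ x Wa', ω x Wa' =
      fderiv ℝ σ x (Fvec f x + Gapp g x (uHat g R σ x Wa')))
    (Δ : XSp n → ℝ)
    (hΔ : ∀ x, Δ x =
      (1 / 2 : ℝ) * (gradSigmaG g σ x W ⬝ᵥ
          R⁻¹.mulVec (fun j => fderiv ℝ ε x (Gcol g x j)))
        + (1 / 4 : ℝ) * ((fun j => fderiv ℝ ε x (Gcol g x j)) ⬝ᵥ
          R⁻¹.mulVec (fun j => fderiv ℝ ε x (Gcol g x j)))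
        - fderiv ℝ ε x (Fvec f x)) :
    ∀ x : XSp n,
      δ x Wc Wa =
        -(ω x Wa ⬝ᵥ (W - Wc))
          + (1 / 4 : ℝ) * (gradSigmaG g σ x (W - Wa) ⬝ᵥ
              R⁻¹.mulVec (gradSigmaG g σ x (W - Wa)))
          + Δ x := by
  intro x
  -- basic matrix facts
  have hRinv : R * R⁻¹ = 1 :=
    Matrix.mul_nonsing_inv R (isUnit_iff_ne_zero.mpr hR.det_pos.ne')
  have hRT : (R⁻¹)ᵀ = R⁻¹ := by
    rw [Matrix.transpose_nonsing_inv]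
    congr 1
    rw [← Matrix.conjTranspose_eq_transpose_of_trivial]; exact hR.isHermitian.eq
  have hsym : ∀ a b : Fin m → ℝ, a ⬝ᵥ R⁻¹.mulVec b = b ⬝ᵥ R⁻¹.mulVec a := by
    intro a b
    rw [Matrix.dotProduct_mulVec, ← Matrix.mulVec_transpose, hRT, dotProduct_comm]
  -- abbreviations
  set S := fderiv ℝ σ x with hS
  set D := fderiv ℝ V x with hD
  set dV : Fin m → ℝ := fun j => D (Gcol g x j) with hdV
  set sW : Fin m → ℝ := gradSigmaG g σ x W with hsW
  set sWa : Fin m → ℝ := gradSigmaG g σ x Wa with hsWa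
  set sWc : Fin m → ℝ := gradSigmaG g σ x Wc with hsWc
  -- G(x)u as a combination of columns
  have hGapp : ∀ u : Fin m → ℝ, Gapp g x u = ∑ j, u j • Gcol g x j := by
    intro u
    unfold Gapp Gcol
    ext i <;>
      simp [Matrix.mulVec, dotProduct, Finset.sum_apply, Prod.fst_sum, Prod.snd_sum, mul_comm]
  have hDG : ∀ u : Fin m → ℝ, D (Gapp g x u) = u ⬝ᵥ dV := by
    intro u
    rw [hGapp, map_sum]
    simp [dotProduct, hdV]
  have hSG : ∀ (c : Fin L → ℝ) (u : Fin m → ℝ),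
      c ⬝ᵥ S (Gapp g x u) = u ⬝ᵥ gradSigmaG g σ x c := by
    intro c u
    rw [hGapp, map_sum]
    simp only [dotProduct, gradSigmaG, Finset.sum_apply, ContinuousLinearMap.map_smul,
      Pi.smul_apply, smul_eq_mul, Finset.mul_sum, ← hS]
    rw [Finset.sum_comm]
    congr 1; ext j; congr 1; ext i; ring
  -- derivative of ε
  have hεd : ∀ v : XSp n, fderiv ℝ ε x v = D v - W ⬝ᵥ S v := by
    intro v
    have hεf : ε = fun y => V y - W ⬝ᵥ σ y := funext hε
    have hVd : HasFDerivAt V D x := (hV.differentiable one_ne_zero x).hasFDerivAt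
    have hσd : HasFDerivAt σ S x := (hσ.differentiable one_ne_zero x).hasFDerivAt
    have hdot : HasFDerivAt (fun y => W ⬝ᵥ σ y)
        (∑ i, W i • ((ContinuousLinearMap.proj i : (Fin L → ℝ) →L[ℝ] ℝ).comp S)) x := by
      have h : ∀ i : Fin L, HasFDerivAt (fun y => W i * σ y i)
          (W i • ((ContinuousLinearMap.proj i : (Fin L → ℝ) →L[ℝ] ℝ).comp S)) x :=
        fun i => (((ContinuousLinearMap.proj i : (Fin L → ℝ) →L[ℝ] ℝ).hasFDerivAt.comp
          x hσd).const_mul (W i))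
      simpa [dotProduct] using HasFDerivAt.fun_sum (u := Finset.univ) (fun i _ => h i)
    have hεdd : HasFDerivAt ε
        (D - ∑ i, W i • ((ContinuousLinearMap.proj i : (Fin L → ℝ) →L[ℝ] ℝ).comp S)) x := by
      rw [hεf]; exact hVd.sub hdot
    rw [hεdd.fderiv]
    simp [dotProduct, ContinuousLinearMap.sum_apply]
  have hεcol : (fun j => fderiv ℝ ε x (Gcol g x j)) = fun j => dV j - sW j := by
    funext j; rw [hεd]; rfl
  -- Q from the HJB equation
  have hHJBx := hHJB x
  have huStar : uStar g R V x = (-(1 / 2 : ℝ)) • R⁻¹.mulVec dV := rfl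
  have hcancel : ∀ v : Fin m → ℝ, R.mulVec (R⁻¹.mulVec v) = v := by
    intro v; rw [Matrix.mulVec_mulVec, hRinv, Matrix.one_mulVec]
  have hQ : Q x = -(D (Fvec f x)) + (1 / 4 : ℝ) * (R⁻¹.mulVec dV ⬝ᵥ dV) := by
    rw [map_add, hDG, huStar] at hHJBx
    rw [smul_dotProduct, Matrix.mulVec_smul, dotProduct_smul,
      hcancel, smul_dotProduct] at hHJBx
    simp only [smul_eq_mul] at hHJBx
    linarith
  -- expand û
  have huHat : uHat g R σ x Wa = (-(1 / 2 : ℝ)) • R⁻¹.mulVec sWa := rfl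
  have huRu : uHat g R σ x Wa ⬝ᵥ R.mulVec (uHat g R σ x Wa)
      = (1 / 4 : ℝ) * (R⁻¹.mulVec sWa ⬝ᵥ sWa) := by
    rw [huHat, smul_dotProduct, Matrix.mulVec_smul, dotProduct_smul, hcancel]
    simp; ring
  -- the ω terms
  have hωx : ∀ c : Fin L → ℝ, c ⬝ᵥ ω x Wa
      = c ⬝ᵥ S (Fvec f x) + (-(1 / 2 : ℝ)) * (R⁻¹.mulVec sWa ⬝ᵥ gradSigmaG g σ x c) := by
    intro c
    rw [hω, map_add, dotProduct_add, hSG, huHat, smul_dotProduct]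
    simp [hS]
  -- main computation
  rw [hδ, hΔ, hεcol]
  have hωsub : ω x Wa ⬝ᵥ (W - Wc) = W ⬝ᵥ ω x Wa - Wc ⬝ᵥ ω x Wa := by
    rw [dotProduct_comm, sub_dotProduct]
  have hδω : Wc ⬝ᵥ S (Fvec f x + Gapp g x (uHat g R σ x Wa)) = Wc ⬝ᵥ ω x Wa := by
    rw [hω]
  have hεF : fderiv ℝ ε x (Fvec f x) = D (Fvec f x) - W ⬝ᵥ S (Fvec f x) := hεd _
  have hsub : gradSigmaG g σ x (W - Wa) = fun j => sW j - sWa j := by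
    funext j
    simp [gradSigmaG, sub_dotProduct, hsW, hsWa]
  rw [hδω, hωsub, hQ, huRu, hεF, hsub, hωx W]
  -- expand all remaining bilinear terms and finish linearly
  have e1 : (fun j => sW j - sWa j) ⬝ᵥ R⁻¹.mulVec (fun j => sW j - sWa j)
      = sW ⬝ᵥ R⁻¹.mulVec sW - sW ⬝ᵥ R⁻¹.mulVec sWa - sWa ⬝ᵥ R⁻¹.mulVec sW
        + sWa ⬝ᵥ R⁻¹.mulVec sWa := by
    have : (fun j => sW j - sWa j) = sW - sWa := rfl
    rw [this, Matrix.mulVec_sub, sub_dotProduct, dotProduct_sub,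
      dotProduct_sub]
    ring
  have e2 : sW ⬝ᵥ R⁻¹.mulVec (fun j => dV j - sW j)
      = sW ⬝ᵥ R⁻¹.mulVec dV - sW ⬝ᵥ R⁻¹.mulVec sW := by
    have : (fun j => dV j - sW j) = dV - sW := rfl
    rw [this, Matrix.mulVec_sub, dotProduct_sub]
  have e3 : (fun j => dV j - sW j) ⬝ᵥ R⁻¹.mulVec (fun j => dV j - sW j)
      = dV ⬝ᵥ R⁻¹.mulVec dV - dV ⬝ᵥ R⁻¹.mulVec sW - sW ⬝ᵥ R⁻¹.mulVec dV
        + sW ⬝ᵥ R⁻¹.mulVec sW := by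
    have : (fun j => dV j - sW j) = dV - sW := rfl
    rw [this, Matrix.mulVec_sub, sub_dotProduct, dotProduct_sub,
      dotProduct_sub]
    ring
  rw [e1, e2, e3]
  have s1 := hsym dV sW
  have s2 := hsym dV sWa
  have s3 := hsym sW sWa
  have s4 := hsym dV dV
  have s5 := hsym sWa sWa
  have s6 := hsym sWa (gradSigmaG g σ x W)
  have hgW : gradSigmaG g σ x W = sW := rfl
  rw [hgW]
  have c1 : (R⁻¹ *ᵥ dV) ⬝ᵥ dV = dV ⬝ᵥ R⁻¹ *ᵥ dV := dotProduct_comm _ _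
  have c2 : (R⁻¹ *ᵥ sWa) ⬝ᵥ sWa = sWa ⬝ᵥ R⁻¹ *ᵥ sWa := dotProduct_comm _ _
  have c3 : (R⁻¹ *ᵥ sWa) ⬝ᵥ sW = sW ⬝ᵥ R⁻¹ *ᵥ sWa := dotProduct_comm _ _
  linarith [s1, s2, s3, c1, c2, c3]
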